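/- Let μ and ν be finite nonnegative Radon measures on X whose supports are contained in 𝕋^d × B_{P_T}(0) × [θ_m^0, θ_M^0], where P_T > 0 and 0 < θ_m^0 ≤ θ_M^0, and with μ(X), ν(X) ≤ m_0. Define a(x,μ) = ∫_X φ(x_*−x)(v_*/θ_*) dμ(z_*), ρ_φ(x,μ) = ∫_X φ(x_*−x) dμ(z_*), b(x,μ) = ∫_X ζ(x_*−x)(1/θ_*) dμ(z_*), and ρ_ζ(x,μ) = ∫_X ζ(x_*−x) dμ(z_*). Then there exists a constant C > 0, depending only on P_T, θ_m^0, m_0, ‖φ‖_{L^∞}, ‖φ‖_{Lip}, ‖ζ‖_{L^∞}, ‖ζ‖_{Lip}, such that for all x_1, x_2 ∈ 𝕋^d: |a(x_1,μ) − a(x_2,ν)| ≤ C(|x_1 − x_2| + d(μ,ν)), |b(x_1,μ) − b(x_2,ν)| ≤ C(|x_1 − x_2| + d(μ,ν)), |ρ_φ(x_1,μ) − ρ_φ(x_2,ν)| ≤ C(|x_1 − x_2| + d(μ,ν)), and |ρ_ζ(x_1,μ) − ρ_ζ(x_2,ν)| ≤ C(|x_1 − x_2| + d(μ,ν)). -/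

import Mathlib

open MeasureTheory Set
open scoped Topology NNReal

noncomputable section

instance factZeroLtOne' : Fact ((0:ℝ) < 1) := ⟨zero_lt_one⟩

/-- The `d`-dimensional torus `𝕋^d = ℝ^d / ℤ^d`. -/
abbrev Td (d : ℕ) := Fin d → AddCircle (1 : ℝ)

/-- The velocity space `ℝ^d` with the Euclidean norm. -/
abbrev Vd (d : ℕ) := EuclideanSpace ℝ (Fin d)

/-- The phase space `X = 𝕋^d × ℝ^d × ℝ` (the temperature variable `θ` is modelled as a real
number; positivity of `θ` is imposed through support conditions). -/
abbrev Xd (d : ℕ) := Td d × Vd d × ℝ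

/-- The canonical projection `ℝ^d → 𝕋^d`. -/
def projT (d : ℕ) (y : Vd d) : Td d := fun i => (y i : AddCircle (1 : ℝ))

variable {d : ℕ}

/-- The alignment force `F[μ](x,v,θ) = ∫ φ(x_* - x) (v_*/θ_* - v/θ) dμ(z_*)`. -/
def Fker (φ : Td d → ℝ) (μ : Measure (Xd d)) (x : Td d) (v : Vd d) (θ : ℝ) : Vd d :=
  ∫ z, φ (z.1 - x) • ((z.2.2)⁻¹ • z.2.1 - θ⁻¹ • v) ∂μ

/-- The temperature interaction `G[μ](x,θ) = ∫ ζ(x_* - x) (1/θ - 1/θ_*) dμ(z_*)`. -/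
def Gker (ζ : Td d → ℝ) (μ : Measure (Xd d)) (x : Td d) (θ : ℝ) : ℝ :=
  ∫ z, ζ (z.1 - x) * (θ⁻¹ - (z.2.2)⁻¹) ∂μ

/-- The bounded Lipschitz distance between two measures on `X`. -/
def blDist (μ ν : Measure (Xd d)) : ℝ :=
  sSup {r | ∃ g : Xd d → ℝ, (∀ z, |g z| ≤ 1) ∧ LipschitzWith 1 g ∧
    r = |(∫ z, g z ∂μ) - ∫ z, g z ∂ν|}

/-- `supp μ ⊆ 𝕋^d × B_P(0) × [θm, θM]`. -/
def SuppIn (μ : Measure (Xd d)) (P θm θM : ℝ) : Prop :=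
  μ {z : Xd d | ¬(‖z.2.1‖ ≤ P ∧ z.2.2 ∈ Icc θm θM)} = 0

/-- `(μ t)_{t ∈ [0,T]}` is a measure-valued solution of the kinetic thermomechanical
Cucker–Smale equation: each `μ t` is a finite measure, `t ↦ ∫ g dμ_t` is continuous for
`g ∈ C_0(X)`, and the weak formulation holds for all test functions `g ∈ C_0^1([0,T) × X)`
(C¹-regularity on the torus is expressed through the lift along `projT`, and the transport
term `∂_s g + v·∇_x g + F[μ_s]·∇_v g + G[μ_s] ∂_θ g` is expressed as the derivative of `g`
along the characteristic direction, which agrees with it by the chain rule). -/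
def IsMVSol (φ ζ : Td d → ℝ) (T : ℝ) (μ : ℝ → Measure (Xd d)) : Prop :=
  (∀ t ∈ Icc (0:ℝ) T, IsFiniteMeasure (μ t)) ∧
  (∀ g : Xd d → ℝ, Continuous g → HasCompactSupport g →
     (∀ z : Xd d, z.2.2 ≤ 0 → g z = 0) →
     ContinuousOn (fun t => ∫ z, g z ∂(μ t)) (Icc 0 T)) ∧
  (∀ g : ℝ → Xd d → ℝ,
     ContDiff ℝ 1 (fun p : ℝ × Vd d × Vd d × ℝ =>
        g p.1 (projT d p.2.1, p.2.2.1, p.2.2.2)) →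
     HasCompactSupport (Function.uncurry g) →
     (∀ s, T ≤ s → ∀ z, g s z = 0) →
     (∀ s, ∀ z : Xd d, z.2.2 ≤ 0 → g s z = 0) →
     ∀ t ∈ Icc (0:ℝ) T,
       (∫ z, g t z ∂(μ t)) - ∫ z, g 0 z ∂(μ 0) =
       ∫ s in (0:ℝ)..t, ∫ z, deriv (fun a : ℝ =>
           g (s + a) (z.1 + projT d (a • z.2.1),
             z.2.1 + a • Fker φ (μ s) z.1 z.2.1 z.2.2,
             z.2.2 + a • Gker ζ (μ s) z.1 z.2.2)) 0 ∂(μ s))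

/-- `a(x,μ) = ∫ φ(x_* - x) (v_*/θ_*) dμ(z_*)`. -/
def aker {d : ℕ} (φ : Td d → ℝ) (μ : Measure (Xd d)) (x : Td d) : Vd d :=
  ∫ z, φ (z.1 - x) • ((z.2.2)⁻¹ • z.2.1) ∂μ

/-- `b(x,μ) = ∫ ζ(x_* - x) (1/θ_*) dμ(z_*)`. -/
def bker {d : ℕ} (ζ : Td d → ℝ) (μ : Measure (Xd d)) (x : Td d) : ℝ :=
  ∫ z, ζ (z.1 - x) * (z.2.2)⁻¹ ∂μ

/-- `ρ_φ(x,μ) = ∫ φ(x_* - x) dμ(z_*)`. -/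
def rker {d : ℕ} (φ : Td d → ℝ) (μ : Measure (Xd d)) (x : Td d) : ℝ :=
  ∫ z, φ (z.1 - x) ∂μ


/-- product of bounded Lipschitz functions is Lipschitz -/
lemma lip_mul {α : Type*} [PseudoMetricSpace α] {f g : α → ℝ} {Kf Lf Kg Lg : ℝ}
    (hKf0 : 0 ≤ Kf) (hKg0 : 0 ≤ Kg) (hLf0 : 0 ≤ Lf) (hLg0 : 0 ≤ Lg)
    (hKf : ∀ a, |f a| ≤ Kf) (hf : LipschitzWith Lf.toNNReal f)
    (hKg : ∀ a, |g a| ≤ Kg) (hg : LipschitzWith Lg.toNNReal g) :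
    LipschitzWith (Kf * Lg + Kg * Lf).toNNReal (fun a => f a * g a) := by
  refine LipschitzWith.of_dist_le_mul fun a b => ?_
  have h1 := hf.dist_le_mul a b
  have h2 := hg.dist_le_mul a b
  rw [Real.coe_toNNReal _ hLf0, Real.dist_eq] at h1
  rw [Real.coe_toNNReal _ hLg0, Real.dist_eq] at h2
  rw [Real.coe_toNNReal _ (by positivity), Real.dist_eq]
  have key : f a * g a - f b * g b = f a * (g a - g b) + g b * (f a - f b) := by ring
  calc |f a * g a - f b * g b| ≤ |f a * (g a - g b)| + |g b * (f a - f b)| := by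
        rw [key]; exact abs_add_le _ _
    _ = |f a| * |g a - g b| + |g b| * |f a - f b| := by rw [abs_mul, abs_mul]
    _ ≤ Kf * (Lg * dist a b) + Kg * (Lf * dist a b) := by
        have := hKf a; have := hKg b
        have d0 : (0:ℝ) ≤ dist a b := dist_nonneg
        nlinarith [abs_nonneg (g a - g b), abs_nonneg (f a - f b), abs_nonneg (f a), abs_nonneg (g b)]
    _ = (Kf * Lg + Kg * Lf) * dist a b := by ring

lemma blDist_bddAbove (μ ν : Measure (Xd d)) [IsFiniteMeasure μ] [IsFiniteMeasure ν] :
    BddAbove {r | ∃ g : Xd d → ℝ, (∀ z, |g z| ≤ 1) ∧ LipschitzWith 1 g ∧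
      r = |(∫ z, g z ∂μ) - ∫ z, g z ∂ν|} := by
  refine ⟨(μ univ).toReal + (ν univ).toReal, ?_⟩
  rintro r ⟨g, hb, _, rfl⟩
  have h1 : ‖∫ z, g z ∂μ‖ ≤ 1 * (μ univ).toReal :=
    norm_integral_le_of_norm_le_const (Filter.Eventually.of_forall (fun z => by
      simpa using hb z))
  have h2 : ‖∫ z, g z ∂ν‖ ≤ 1 * (ν univ).toReal :=
    norm_integral_le_of_norm_le_const (Filter.Eventually.of_forall (fun z => by
      simpa using hb z))
  calc |(∫ z, g z ∂μ) - ∫ z, g z ∂ν| ≤ ‖∫ z, g z ∂μ‖ + ‖∫ z, g z ∂ν‖ := abs_sub _ _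
    _ ≤ (μ univ).toReal + (ν univ).toReal := by
        rw [one_mul] at h1 h2; exact add_le_add h1 h2

lemma blDist_nonneg (μ ν : Measure (Xd d)) [IsFiniteMeasure μ] [IsFiniteMeasure ν] :
    0 ≤ blDist μ ν := by
  refine le_csSup (blDist_bddAbove μ ν) ⟨fun _ => 0, fun z => by norm_num, ?_, by simp⟩
  exact LipschitzWith.const' 0

lemma integrable_of_bdd_lip {μ : Measure (Xd d)} [IsFiniteMeasure μ] {g : Xd d → ℝ} {c L : ℝ}
    (hb : ∀ z, |g z| ≤ c) (hl : LipschitzWith L.toNNReal g) : Integrable g μ :=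
  (integrable_const c).mono' hl.continuous.aestronglyMeasurable
    (Filter.Eventually.of_forall (fun z => by simpa using hb z))

lemma abs_integral_sub_le_blDist (μ ν : Measure (Xd d)) [IsFiniteMeasure μ] [IsFiniteMeasure ν]
    {g : Xd d → ℝ} {c : ℝ} (hc : 0 < c) (hb : ∀ z, |g z| ≤ c)
    (hl : LipschitzWith c.toNNReal g) :
    |(∫ z, g z ∂μ) - ∫ z, g z ∂ν| ≤ c * blDist μ ν := by
  set h : Xd d → ℝ := fun z => c⁻¹ * g z with hh
  have hhb : ∀ z, |h z| ≤ 1 := fun z => by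
    rw [hh]; rw [abs_mul, abs_inv, abs_of_pos hc]
    rw [inv_mul_le_iff₀ hc, mul_one]; exact hb z
  have hhl : LipschitzWith 1 h := by
    refine LipschitzWith.of_dist_le_mul fun a b => ?_
    have := hl.dist_le_mul a b
    rw [Real.coe_toNNReal _ hc.le] at this
    rw [hh, Real.dist_eq, NNReal.coe_one, one_mul]
    have : |c⁻¹ * g a - c⁻¹ * g b| = c⁻¹ * |g a - g b| := by
      rw [← mul_sub, abs_mul, abs_inv, abs_of_pos hc]
    rw [this]
    rw [inv_mul_le_iff₀ hc]
    calc |g a - g b| = dist (g a) (g b) := (Real.dist_eq _ _).symm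
      _ ≤ c * dist a b := hl.dist_le_mul a b |>.trans_eq (by rw [Real.coe_toNNReal _ hc.le])
  have hmem : |(∫ z, h z ∂μ) - ∫ z, h z ∂ν| ∈ {r | ∃ g : Xd d → ℝ, (∀ z, |g z| ≤ 1) ∧
      LipschitzWith 1 g ∧ r = |(∫ z, g z ∂μ) - ∫ z, g z ∂ν|} := ⟨h, hhb, hhl, rfl⟩
  have hle : |(∫ z, h z ∂μ) - ∫ z, h z ∂ν| ≤ blDist μ ν :=
    le_csSup (blDist_bddAbove μ ν) hmem
  have hint : ∀ (ρ : Measure (Xd d)), ∫ z, h z ∂ρ = c⁻¹ * ∫ z, g z ∂ρ := fun ρ => by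
    rw [hh]; exact integral_const_mul c⁻¹ g
  rw [hint μ, hint ν, ← mul_sub, abs_mul, abs_inv, abs_of_pos hc] at hle
  calc |(∫ z, g z ∂μ) - ∫ z, g z ∂ν| = c * (c⁻¹ * |(∫ z, g z ∂μ) - ∫ z, g z ∂ν|) := by
        field_simp
    _ ≤ c * blDist μ ν := by exact mul_le_mul_of_nonneg_left hle hc.le

lemma integral_congr_suppIn {μ : Measure (Xd d)} {P θm θM : ℝ} (hs : SuppIn μ P θm θM)
    {E : Type*} [NormedAddCommGroup E] [NormedSpace ℝ E] {f g : Xd d → E}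
    (h : ∀ z : Xd d, ‖z.2.1‖ ≤ P → z.2.2 ∈ Icc θm θM → f z = g z) :
    ∫ z, f z ∂μ = ∫ z, g z ∂μ := by
  refine integral_congr_ae ?_
  rw [Filter.eventuallyEq_iff_exists_mem]
  refine ⟨{z : Xd d | ‖z.2.1‖ ≤ P ∧ z.2.2 ∈ Icc θm θM}, ?_, fun z hz => h z hz.1 hz.2⟩
  rw [MeasureTheory.mem_ae_iff]
  exact hs

lemma ae_suppIn {μ : Measure (Xd d)} {P θm θM : ℝ} (hs : SuppIn μ P θm θM)
    {p : Xd d → Prop} (h : ∀ z : Xd d, ‖z.2.1‖ ≤ P → z.2.2 ∈ Icc θm θM → p z) :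
    ∀ᵐ z ∂μ, p z := by
  rw [MeasureTheory.ae_iff]
  refine measure_mono_null (fun z hz => ?_) hs
  simp only [mem_setOf_eq] at hz ⊢
  exact fun ⟨h1, h2⟩ => hz (h z h1 h2)

def clampF (θm θM t : ℝ) : ℝ := max θm (min t θM)
def tinvF (θm θM t : ℝ) : ℝ := (clampF θm θM t)⁻¹
def scutF (P s : ℝ) : ℝ := max (-P) (min s P)

lemma clampF_mem {θm θM : ℝ} (h : θm ≤ θM) (t : ℝ) : clampF θm θM t ∈ Icc θm θM :=
  ⟨le_max_left _ _, max_le h (min_le_right _ _)⟩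

lemma clampF_eq {θm θM t : ℝ} (ht : t ∈ Icc θm θM) : clampF θm θM t = t := by
  rw [clampF, min_eq_left ht.2, max_eq_right ht.1]

lemma clampF_lip (θm θM : ℝ) : LipschitzWith 1 (clampF θm θM) := by
  refine LipschitzWith.of_dist_le_mul fun a b => ?_
  rw [NNReal.coe_one, one_mul, Real.dist_eq, Real.dist_eq, clampF, clampF,
    max_comm θm _, max_comm θm _]
  calc |min a θM ⊔ θm - min b θM ⊔ θm| ≤ |min a θM - min b θM| := abs_max_sub_max_le_abs _ _ _
    _ ≤ max |a - b| |θM - θM| := abs_min_sub_min_le_max _ _ _ _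
    _ = |a - b| := by simp [abs_nonneg]

lemma tinvF_bound {θm θM : ℝ} (hθm : 0 < θm) (h : θm ≤ θM) (t : ℝ) : |tinvF θm θM t| ≤ θm⁻¹ := by
  have h1 := (clampF_mem h t).1
  have h2 : 0 < clampF θm θM t := lt_of_lt_of_le hθm h1
  rw [tinvF, abs_inv, abs_of_pos h2]
  exact inv_anti₀ hθm h1

lemma tinvF_eq {θm θM t : ℝ} (ht : t ∈ Icc θm θM) : tinvF θm θM t = t⁻¹ := by
  rw [tinvF, clampF_eq ht]

lemma tinvF_lip {θm θM : ℝ} (hθm : 0 < θm) : LipschitzWith (θm⁻¹ * θm⁻¹).toNNReal (tinvF θm θM) := by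
  refine LipschitzWith.of_dist_le_mul fun a b => ?_
  rw [Real.coe_toNNReal _ (by positivity), Real.dist_eq, Real.dist_eq]
  set A := clampF θm θM a
  set B := clampF θm θM b
  have hA : θm ≤ A := le_max_left _ _
  have hB : θm ≤ B := le_max_left _ _
  have hA0 : 0 < A := lt_of_lt_of_le hθm hA
  have hB0 : 0 < B := lt_of_lt_of_le hθm hB
  have hAB : |A - B| ≤ |a - b| := by
    have := (clampF_lip θm θM).dist_le_mul a b
    rwa [NNReal.coe_one, one_mul, Real.dist_eq, Real.dist_eq] at this
  have key : tinvF θm θM a - tinvF θm θM b = (B - A) / (A * B) := by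
    rw [tinvF, tinvF]; exact inv_sub_inv hA0.ne' hB0.ne'
  rw [key, abs_div, abs_mul, abs_of_pos hA0, abs_of_pos hB0]
  rw [div_le_iff₀ (by positivity)]
  have h1 : |B - A| ≤ |a - b| := by rwa [abs_sub_comm]
  have hm2 : θm * θm ≤ A * B := by nlinarith
  have step : |a - b| ≤ θm⁻¹ * θm⁻¹ * |a - b| * (A * B) := by
    calc |a - b| = θm⁻¹ * θm⁻¹ * |a - b| * (θm * θm) := by field_simp
      _ ≤ θm⁻¹ * θm⁻¹ * |a - b| * (A * B) := by
          exact mul_le_mul_of_nonneg_left hm2 (by positivity)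
  linarith

lemma scutF_bound {P : ℝ} (hP : 0 ≤ P) (s : ℝ) : |scutF P s| ≤ P := by
  rw [abs_le, scutF]
  constructor
  · exact le_max_left _ _
  · exact max_le (by linarith) (min_le_right _ _)

lemma scutF_eq {P s : ℝ} (hs : |s| ≤ P) : scutF P s = s := by
  rw [abs_le] at hs
  rw [scutF, min_eq_left hs.2, max_eq_right hs.1]

lemma scutF_lip (P : ℝ) : LipschitzWith 1 (scutF P) := by
  refine LipschitzWith.of_dist_le_mul fun a b => ?_
  rw [NNReal.coe_one, one_mul, Real.dist_eq, Real.dist_eq, scutF, scutF,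
    max_comm (-P) _, max_comm (-P) _]
  calc |min a P ⊔ (-P) - min b P ⊔ (-P)| ≤ |min a P - min b P| := abs_max_sub_max_le_abs _ _ _
    _ ≤ max |a - b| |P - P| := abs_min_sub_min_le_max _ _ _ _
    _ = |a - b| := by simp [abs_nonneg]

lemma lip_sub_fst (x : Td d) : LipschitzWith 1 (fun z : Xd d => z.1 - x) := by
  refine LipschitzWith.of_dist_le_mul fun a b => ?_
  rw [NNReal.coe_one, one_mul, dist_sub_right]
  rw [Prod.dist_eq]
  exact le_max_left _ _

lemma lip_comp_fst {L : ℝ} (hL : 0 ≤ L) {k : Td d → ℝ} (hk : LipschitzWith L.toNNReal k)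
    (x : Td d) : LipschitzWith L.toNNReal (fun z : Xd d => k (z.1 - x)) := by
  have := hk.comp (lip_sub_fst x)
  simpa [Function.comp_def] using this

/-- The main stability estimate for kernel functionals. -/
lemma kernel_stab {μ ν : Measure (Xd d)} [IsFiniteMeasure μ] [IsFiniteMeasure ν]
    {m0 : ℝ} (hm0 : 0 ≤ m0)
    (hmμ : μ Set.univ ≤ ENNReal.ofReal m0) (hmν : ν Set.univ ≤ ENNReal.ofReal m0)
    (k : Td d → ℝ) (u : Xd d → ℝ) (Mk Lk Ku Lu : ℝ)
    (hMk0 : 0 ≤ Mk) (hLk0 : 0 ≤ Lk) (hKu0 : 0 ≤ Ku) (hLu0 : 0 ≤ Lu)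
    (hMk : ∀ x, |k x| ≤ Mk) (hLk : LipschitzWith Lk.toNNReal k)
    (hKu : ∀ z, |u z| ≤ Ku) (hLu : LipschitzWith Lu.toNNReal u)
    (x₁ x₂ : Td d) :
    |(∫ z, k (z.1 - x₁) * u z ∂μ) - ∫ z, k (z.1 - x₂) * u z ∂ν| ≤
      (Lk * Ku * m0 + (Mk * Ku + (Mk * Lu + Ku * Lk) + 1)) * (dist x₁ x₂ + blDist μ ν) := by
  set c : ℝ := Mk * Ku + (Mk * Lu + Ku * Lk) + 1 with hc
  have hcpos : 0 < c := by positivity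
  have hgb : ∀ x : Td d, ∀ z : Xd d, |k (z.1 - x) * u z| ≤ Mk * Ku := fun x z => by
    rw [abs_mul]
    exact mul_le_mul (hMk _) (hKu _) (abs_nonneg _) hMk0
  have hgl : ∀ x : Td d, LipschitzWith (Mk * Lu + Ku * Lk).toNNReal
      (fun z : Xd d => k (z.1 - x) * u z) := fun x =>
    lip_mul hMk0 hKu0 hLk0 hLu0 (fun z => hMk _) (lip_comp_fst hLk0 hLk x) hKu hLu
  -- step 1 : change base point under μ
  have hint : ∀ x : Td d, ∀ ρ : Measure (Xd d), ∀ _ : IsFiniteMeasure ρ,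
      Integrable (fun z : Xd d => k (z.1 - x) * u z) ρ := fun x ρ hρ =>
    integrable_of_bdd_lip (hgb x) (hgl x)
  have step1 : |(∫ z, k (z.1 - x₁) * u z ∂μ) - ∫ z, k (z.1 - x₂) * u z ∂μ| ≤
      Lk * Ku * m0 * dist x₁ x₂ := by
    rw [← integral_sub (hint x₁ μ inferInstance) (hint x₂ μ inferInstance)]
    have hptw : ∀ z : Xd d, ‖k (z.1 - x₁) * u z - k (z.1 - x₂) * u z‖ ≤
        Lk * dist x₁ x₂ * Ku := fun z => by
      rw [Real.norm_eq_abs, ← sub_mul, abs_mul]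
      refine mul_le_mul ?_ (hKu z) (abs_nonneg _) (by positivity)
      have := hLk.dist_le_mul (z.1 - x₁) (z.1 - x₂)
      rw [Real.coe_toNNReal _ hLk0, Real.dist_eq, dist_sub_left] at this
      exact this
    have := norm_integral_le_of_norm_le_const (μ := μ) (Filter.Eventually.of_forall hptw)
    rw [Real.norm_eq_abs] at this
    refine this.trans ?_
    have hμle : (μ Set.univ).toReal ≤ m0 := ENNReal.toReal_le_of_le_ofReal hm0 hmμ
    calc Lk * dist x₁ x₂ * Ku * (μ Set.univ).toReal ≤ Lk * dist x₁ x₂ * Ku * m0 := by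
          refine mul_le_mul_of_nonneg_left hμle (by positivity)
      _ = Lk * Ku * m0 * dist x₁ x₂ := by ring
  -- step 2 : change measure
  have step2 : |(∫ z, k (z.1 - x₂) * u z ∂μ) - ∫ z, k (z.1 - x₂) * u z ∂ν| ≤
      c * blDist μ ν := by
    refine abs_integral_sub_le_blDist μ ν hcpos (fun z => (hgb x₂ z).trans (by nlinarith)) ?_
    exact (hgl x₂).weaken (Real.toNNReal_mono (by nlinarith))
  have tri : |(∫ z, k (z.1 - x₁) * u z ∂μ) - ∫ z, k (z.1 - x₂) * u z ∂ν| ≤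
      |(∫ z, k (z.1 - x₁) * u z ∂μ) - ∫ z, k (z.1 - x₂) * u z ∂μ| +
      |(∫ z, k (z.1 - x₂) * u z ∂μ) - ∫ z, k (z.1 - x₂) * u z ∂ν| := abs_sub_le _ _ _
  have hd0 : (0:ℝ) ≤ dist x₁ x₂ := dist_nonneg
  have hb0 : (0:ℝ) ≤ blDist μ ν := blDist_nonneg μ ν
  have hLKm : 0 ≤ Lk * Ku * m0 := by positivity
  have e1 : Lk * Ku * m0 * dist x₁ x₂ ≤ (Lk * Ku * m0 + c) * dist x₁ x₂ :=
    mul_le_mul_of_nonneg_right (by linarith) hd0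
  have e2 : c * blDist μ ν ≤ (Lk * Ku * m0 + c) * blDist μ ν :=
    mul_le_mul_of_nonneg_right (by linarith) hb0
  refine tri.trans ?_
  have hr : (Lk * Ku * m0 + c) * (dist x₁ x₂ + blDist μ ν) =
      (Lk * Ku * m0 + c) * dist x₁ x₂ + (Lk * Ku * m0 + c) * blDist μ ν := by ring
  rw [hr]
  exact add_le_add (step1.trans e1) (step2.trans e2)

lemma lip_theta : LipschitzWith 1 (fun z : Xd d => z.2.2) := by
  simpa [Function.comp_def] using LipschitzWith.prod_snd.comp (LipschitzWith.prod_snd (α := Td d) (β := Vd d × ℝ))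

lemma lip_inner {e : Vd d} (he : ‖e‖ ≤ 1) :
    LipschitzWith 1 (fun z : Xd d => (inner ℝ e z.2.1 : ℝ)) := by
  refine LipschitzWith.of_dist_le_mul fun a b => ?_
  rw [NNReal.coe_one, one_mul, Real.dist_eq, ← inner_sub_right]
  have h1 : |(inner ℝ e (a.2.1 - b.2.1) : ℝ)| ≤ ‖e‖ * ‖a.2.1 - b.2.1‖ := abs_real_inner_le_norm _ _
  have h2 : ‖a.2.1 - b.2.1‖ = dist a.2.1 b.2.1 := (dist_eq_norm _ _).symm
  have h3 : dist a.2.1 b.2.1 ≤ dist a b := by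
    calc dist a.2.1 b.2.1 ≤ dist a.2 b.2 := by rw [Prod.dist_eq]; exact le_max_left _ _
      _ ≤ dist a b := by rw [Prod.dist_eq]; exact le_max_right _ _
  calc |(inner ℝ e (a.2.1 - b.2.1) : ℝ)| ≤ ‖e‖ * dist a.2.1 b.2.1 := by rw [← h2]; exact h1
    _ ≤ 1 * dist a b := mul_le_mul he h3 dist_nonneg zero_le_one
    _ = dist a b := one_mul _

lemma coeff_ge_one {Mk Lk Ku Lu m0 : ℝ} (h1 : 0 ≤ Mk) (h2 : 0 ≤ Lk) (h3 : 0 ≤ Ku)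
    (h4 : 0 ≤ Lu) (h5 : 0 ≤ m0) :
    (1:ℝ) ≤ Lk * Ku * m0 + (Mk * Ku + (Mk * Lu + Ku * Lk) + 1) := by
  nlinarith [mul_nonneg (mul_nonneg h2 h3) h5, mul_nonneg h1 h3, mul_nonneg h1 h4,
    mul_nonneg h3 h2]

lemma aker_pair {P θm θM Mφ Lφ : ℝ} (hP : 0 < P) (hθm : 0 < θm) (hθmM : θm ≤ θM)
    {φ : Td d → ℝ} (hMφ : ∀ x, |φ x| ≤ Mφ) (hLφnn : 0 ≤ Lφ)
    (hLφ : LipschitzWith Lφ.toNNReal φ)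
    (ρ : Measure (Xd d)) [IsFiniteMeasure ρ] (hs : SuppIn ρ P θm θM)
    (e : Vd d) (he : ‖e‖ = 1) (x : Td d) :
    (inner ℝ e (aker φ ρ x) : ℝ) =
      ∫ z, φ (z.1 - x) * (tinvF θm θM z.2.2 * scutF P (inner ℝ e z.2.1)) ∂ρ := by
  have hMφ0 : 0 ≤ Mφ := le_trans (abs_nonneg _) (hMφ 0)
  have him : (0:ℝ) ≤ θm⁻¹ := (inv_pos.mpr hθm).le
  have hF : Integrable (fun z : Xd d => φ (z.1 - x) • ((z.2.2)⁻¹ • z.2.1)) ρ := by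
    refine (integrable_const (Mφ * (θm⁻¹ * P))).mono' ?_ ?_
    · exact (Measurable.smul ((lip_comp_fst hLφnn hLφ x).continuous.measurable)
        (((measurable_snd.comp measurable_snd).inv).smul
          (measurable_fst.comp measurable_snd))).aestronglyMeasurable
    · refine ae_suppIn hs (fun z h1 h2 => ?_)
      have hz : 0 < z.2.2 := lt_of_lt_of_le hθm h2.1
      have hi : z.2.2⁻¹ ≤ θm⁻¹ := inv_anti₀ hθm h2.1
      rw [norm_smul, norm_smul, norm_inv, Real.norm_eq_abs, Real.norm_eq_abs,
        abs_of_pos hz]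
      have hin : z.2.2⁻¹ * ‖z.2.1‖ ≤ θm⁻¹ * P :=
        mul_le_mul hi h1 (norm_nonneg _) him
      exact mul_le_mul (hMφ _) hin
        (mul_nonneg (inv_nonneg.mpr hz.le) (norm_nonneg _)) hMφ0
  rw [aker, ← integral_inner hF e]
  refine integral_congr_suppIn hs (fun z h1 h2 => ?_)
  have hab : |(inner ℝ e z.2.1 : ℝ)| ≤ P := by
    calc |(inner ℝ e z.2.1 : ℝ)| ≤ ‖e‖ * ‖z.2.1‖ := abs_real_inner_le_norm _ _
      _ ≤ P := by rw [he, one_mul]; exact h1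
  rw [real_inner_smul_right, real_inner_smul_right, tinvF_eq h2, scutF_eq hab]

/-- joint stability of the functionals `a`, `b`, `ρ_φ`, `ρ_ζ` in the base
point and in the input measure: there is a constant `C > 0` (depending only on the data)
such that each of them varies by at most `C(|x₁ - x₂| + d(μ,ν))`. -/
theorem functionals_joint_stability
    (d : ℕ) (φ ζ : Td d → ℝ)
    (hφ0 : ∀ x, 0 ≤ φ x) (hζ0 : ∀ x, 0 ≤ ζ x)
    (Mφ Lφ Mζ Lζ : ℝ) (hMφ : ∀ x, |φ x| ≤ Mφ) (hMζ : ∀ x, |ζ x| ≤ Mζ)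
    (hLφnn : 0 ≤ Lφ) (hLζnn : 0 ≤ Lζ)
    (hLφ : LipschitzWith (Real.toNNReal Lφ) φ)
    (hLζ : LipschitzWith (Real.toNNReal Lζ) ζ)
    (P θm θM m0 : ℝ) (hP : 0 < P) (hθm : 0 < θm) (hθmM : θm ≤ θM) (hm0 : 0 ≤ m0)
    (μ ν : Measure (Xd d)) [IsFiniteMeasure μ] [IsFiniteMeasure ν]
    (hsμ : SuppIn μ P θm θM) (hsν : SuppIn ν P θm θM)
    (hmμ : μ Set.univ ≤ ENNReal.ofReal m0) (hmν : ν Set.univ ≤ ENNReal.ofReal m0) :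
    ∃ C : ℝ, 0 < C ∧ ∀ x₁ x₂ : Td d,
      ‖aker φ μ x₁ - aker φ ν x₂‖ ≤ C * (dist x₁ x₂ + blDist μ ν) ∧
      |bker ζ μ x₁ - bker ζ ν x₂| ≤ C * (dist x₁ x₂ + blDist μ ν) ∧
      |rker φ μ x₁ - rker φ ν x₂| ≤ C * (dist x₁ x₂ + blDist μ ν) ∧
      |rker ζ μ x₁ - rker ζ ν x₂| ≤ C * (dist x₁ x₂ + blDist μ ν) := by
  have hMφ0 : 0 ≤ Mφ := le_trans (abs_nonneg _) (hMφ 0)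
  have hMζ0 : 0 ≤ Mζ := le_trans (abs_nonneg _) (hMζ 0)
  have him : (0:ℝ) ≤ θm⁻¹ := (inv_pos.mpr hθm).le
  have him2 : (0:ℝ) ≤ θm⁻¹ * θm⁻¹ := mul_nonneg him him
  have hKua : (0:ℝ) ≤ θm⁻¹ * P := mul_nonneg him hP.le
  have hLua : (0:ℝ) ≤ θm⁻¹ * 1 + P * (θm⁻¹ * θm⁻¹) := by nlinarith
  set Ca := Lφ * (θm⁻¹ * P) * m0 + (Mφ * (θm⁻¹ * P) +
    (Mφ * (θm⁻¹ * 1 + P * (θm⁻¹ * θm⁻¹)) + (θm⁻¹ * P) * Lφ) + 1) with hCa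
  set Cb := Lζ * θm⁻¹ * m0 + (Mζ * θm⁻¹ + (Mζ * (θm⁻¹ * θm⁻¹) + θm⁻¹ * Lζ) + 1) with hCb
  set Cr1 := Lφ * 1 * m0 + (Mφ * 1 + (Mφ * 0 + 1 * Lφ) + 1) with hCr1
  set Cr2 := Lζ * 1 * m0 + (Mζ * 1 + (Mζ * 0 + 1 * Lζ) + 1) with hCr2
  have h1a : 1 ≤ Ca := coeff_ge_one hMφ0 hLφnn hKua hLua hm0
  have h1b : 1 ≤ Cb := coeff_ge_one hMζ0 hLζnn him him2 hm0
  have h1r1 : 1 ≤ Cr1 := coeff_ge_one hMφ0 hLφnn zero_le_one le_rfl hm0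
  have h1r2 : 1 ≤ Cr2 := coeff_ge_one hMζ0 hLζnn zero_le_one le_rfl hm0
  refine ⟨Ca + Cb + Cr1 + Cr2, by linarith, fun x₁ x₂ => ?_⟩
  have hD0 : 0 ≤ dist x₁ x₂ + blDist μ ν := add_nonneg dist_nonneg (blDist_nonneg μ ν)
  have huθb : ∀ z : Xd d, |tinvF θm θM z.2.2| ≤ θm⁻¹ := fun z => tinvF_bound hθm hθmM _
  have huθl : LipschitzWith (θm⁻¹ * θm⁻¹).toNNReal (fun z : Xd d => tinvF θm θM z.2.2) := by
    simpa [Function.comp_def] using (tinvF_lip (θM := θM) hθm).comp lip_theta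
  have hu1l : LipschitzWith (0:ℝ).toNNReal (fun _ : Xd d => (1:ℝ)) := by
    rw [Real.toNNReal_zero]; exact LipschitzWith.const' 1
  refine ⟨?_, ?_, ?_, ?_⟩
  · -- aker
    set w := aker φ μ x₁ - aker φ ν x₂ with hw
    by_cases hw0 : w = 0
    · rw [hw0, norm_zero]
      exact mul_nonneg (by linarith) hD0
    · set e := ‖w‖⁻¹ • w with hedef
      have hwn : ‖w‖ ≠ 0 := norm_ne_zero_iff.mpr hw0
      have he : ‖e‖ = 1 := by
        rw [hedef, norm_smul, norm_inv, norm_norm, inv_mul_cancel₀ hwn]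
      have hew : (inner ℝ e w : ℝ) = ‖w‖ := by
        rw [hedef, real_inner_smul_left, real_inner_self_eq_norm_mul_norm]
        field_simp
      have hub : ∀ z : Xd d,
          |tinvF θm θM z.2.2 * scutF P (inner ℝ e z.2.1)| ≤ θm⁻¹ * P := fun z => by
        rw [abs_mul]
        exact mul_le_mul (tinvF_bound hθm hθmM _) (scutF_bound hP.le _) (abs_nonneg _) him
      have hul : LipschitzWith (θm⁻¹ * 1 + P * (θm⁻¹ * θm⁻¹)).toNNReal
          (fun z : Xd d => tinvF θm θM z.2.2 * scutF P (inner ℝ e z.2.1)) := by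
        refine lip_mul him hP.le him2 zero_le_one huθb huθl
          (fun z => scutF_bound hP.le _) ?_
        have h : LipschitzWith 1 (fun z : Xd d => scutF P (inner ℝ e z.2.1)) := by
          simpa [Function.comp_def] using (scutF_lip P).comp (lip_inner he.le)
        simpa [Real.toNNReal_one] using h
      have key := kernel_stab hm0 hmμ hmν φ
        (fun z : Xd d => tinvF θm θM z.2.2 * scutF P (inner ℝ e z.2.1))
        Mφ Lφ (θm⁻¹ * P) (θm⁻¹ * 1 + P * (θm⁻¹ * θm⁻¹))
        hMφ0 hLφnn hKua hLua hMφ hLφ hub hul x₁ x₂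
      have hnorm : ‖w‖ =
          (∫ z, φ (z.1 - x₁) * (tinvF θm θM z.2.2 * scutF P (inner ℝ e z.2.1)) ∂μ) -
          ∫ z, φ (z.1 - x₂) * (tinvF θm θM z.2.2 * scutF P (inner ℝ e z.2.1)) ∂ν := by
        rw [← hew, hw, inner_sub_right,
          aker_pair hP hθm hθmM hMφ hLφnn hLφ μ hsμ e he x₁,
          aker_pair hP hθm hθmM hMφ hLφnn hLφ ν hsν e he x₂]
      rw [hnorm]
      exact (le_abs_self _).trans (key.trans (mul_le_mul_of_nonneg_right
        (by rw [← hCa]; linarith) hD0))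
  · -- bker
    have hbeqμ : bker ζ μ x₁ = ∫ z, ζ (z.1 - x₁) * tinvF θm θM z.2.2 ∂μ := by
      rw [bker]
      exact integral_congr_suppIn hsμ (fun z h1 h2 => by rw [tinvF_eq h2])
    have hbeqν : bker ζ ν x₂ = ∫ z, ζ (z.1 - x₂) * tinvF θm θM z.2.2 ∂ν := by
      rw [bker]
      exact integral_congr_suppIn hsν (fun z h1 h2 => by rw [tinvF_eq h2])
    have key := kernel_stab hm0 hmμ hmν ζ (fun z : Xd d => tinvF θm θM z.2.2)
      Mζ Lζ θm⁻¹ (θm⁻¹ * θm⁻¹) hMζ0 hLζnn him him2 hMζ hLζ huθb huθl x₁ x₂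
    rw [hbeqμ, hbeqν]
    exact key.trans (mul_le_mul_of_nonneg_right (by rw [← hCb]; linarith) hD0)
  · -- rker φ
    have key := kernel_stab hm0 hmμ hmν φ (fun _ : Xd d => (1:ℝ)) Mφ Lφ 1 0
      hMφ0 hLφnn zero_le_one le_rfl hMφ hLφ (fun z => by norm_num) hu1l x₁ x₂
    simp only [mul_one] at key
    rw [rker, rker]
    exact key.trans (mul_le_mul_of_nonneg_right (by linarith) hD0)
  · -- rker ζ
    have key := kernel_stab hm0 hmμ hmν ζ (fun _ : Xd d => (1:ℝ)) Mζ Lζ 1 0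
      hMζ0 hLζnn zero_le_one le_rfl hMζ hLζ (fun z => by norm_num) hu1l x₁ x₂
    simp only [mul_one] at key
    rw [rker, rker]
    exact key.trans (mul_le_mul_of_nonneg_right (by linarith) hD0)
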